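/- Let n ≥ 2, s ≥ 4, and let {H_iα_i}_{i=1}^{s} be a coset partition of the free group F_n, where H_i < F_n has finite index d_i, α_i ∈ F_n, and 1 < d_1 ≤ … ≤ d_s. For w ∈ F_n let o_{*i}(w) be the least positive integer m with w^m ∈ α_i⁻¹H_iα_i, and let o_max(w) = max{o_{*i}(w) : 1 ≤ i ≤ s}. If there exists w ∈ F_n with o_max(w) > d_{s-3} and the smallest prime dividing o_max(w) is at least 3, then the partition has multiplicity, i.e., d_i = d_j for some i ≠ j. -/

import Mathlib

open Finset

namespace CosetAux

variable {G : Type*} [Group G]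


lemma pow_mem_iff_dvd (H : Subgroup G) (v : G) (o : ℕ)
    (h : IsLeast {m : ℕ | 0 < m ∧ v ^ m ∈ H} o) (t : ℕ) : v ^ t ∈ H ↔ o ∣ t := by
  obtain ⟨⟨hopos, hoH⟩, hmin⟩ := h
  constructor
  · intro ht
    rcases Nat.eq_zero_or_pos (t % o) with hr | hr
    · exact Nat.dvd_of_mod_eq_zero hr
    · exfalso
      have h1 : v ^ (o * (t / o)) ∈ H := by
        rw [pow_mul]; exact pow_mem hoH _
      have h2 : v ^ (t % o) ∈ H := by
        have ht' : v ^ (o * (t / o) + t % o) = v ^ t := by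
          rw [Nat.div_add_mod]
        have : v ^ (o * (t / o)) * v ^ (t % o) ∈ H := by
          rw [← pow_add, ht']; exact ht
        have := H.mul_mem (H.inv_mem h1) this
        rwa [inv_mul_cancel_left] at this
      have := hmin ⟨hr, h2⟩
      have := Nat.mod_lt t hopos
      omega
  · rintro ⟨k, rfl⟩
    rw [pow_mul]; exact pow_mem hoH k

lemma class_iff (H : Subgroup G) (α w x : G) (o : ℕ)
    (hdvd : ∀ t : ℕ, α * w ^ t * α⁻¹ ∈ H ↔ o ∣ t)
    {m₀ : ℕ} (h₀ : x * w ^ m₀ * α⁻¹ ∈ H) (m : ℕ) :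
    x * w ^ m * α⁻¹ ∈ H ↔ m % o = m₀ % o := by
  have key : ∀ a b : ℕ, a ≤ b →
      x * w ^ b * α⁻¹ = (x * w ^ a * α⁻¹) * (α * w ^ (b - a) * α⁻¹) := by
    intro a b hab
    have hw : w ^ a * w ^ (b - a) = w ^ b := by
      rw [← pow_add]; congr 1; omega
    calc x * w ^ b * α⁻¹ = x * (w ^ a * w ^ (b - a)) * α⁻¹ := by rw [hw]
      _ = (x * w ^ a * α⁻¹) * (α * w ^ (b - a) * α⁻¹) := by group
  rcases le_total m₀ m with hle | hle
  · rw [key m₀ m hle, H.mul_mem_cancel_left h₀, hdvd]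
    constructor
    · intro h
      exact ((Nat.modEq_iff_dvd' hle).mpr h).symm
    · intro h
      exact (Nat.modEq_iff_dvd' hle).mp h.symm
  · have hkey := key m m₀ hle
    constructor
    · intro hm
      have hY : α * w ^ (m₀ - m) * α⁻¹ ∈ H := by
        have h₀' := h₀
        rw [hkey] at h₀'
        exact (H.mul_mem_cancel_left hm).mp h₀'
      exact (Nat.modEq_iff_dvd' hle).mpr ((hdvd _).mp hY)
    · intro hmod
      have hY : α * w ^ (m₀ - m) * α⁻¹ ∈ H := (hdvd _).mpr ((Nat.modEq_iff_dvd' hle).mp hmod)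
      have h₀' := h₀
      rw [hkey] at h₀'
      exact (H.mul_mem_cancel_right hY).mp h₀'

lemma filter_mod_eq_image {L o r : ℕ} (ho : 0 < o) (hdvd : o ∣ L) (hr : r < o) :
    (range L).filter (fun m => m % o = r) = (range (L / o)).image (fun t => r + o * t) := by
  ext m
  simp only [mem_filter, mem_range, mem_image]
  constructor
  · rintro ⟨hm, hmod⟩
    exact ⟨m / o, Nat.div_lt_div_of_lt_of_dvd hdvd hm, by rw [← hmod, Nat.mod_add_div]⟩
  · rintro ⟨t, ht, rfl⟩
    constructor
    · have h1 : o * (t + 1) ≤ o * (L / o) := Nat.mul_le_mul_left _ ht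
      rw [Nat.mul_div_cancel' hdvd] at h1
      have h2 : o * (t + 1) = o * t + o := by ring
      omega
    · rw [Nat.add_mul_mod_self_left, Nat.mod_eq_of_lt hr]

lemma card_filter_mod {L o r : ℕ} (ho : 0 < o) (hdvd : o ∣ L) (hr : r < o) :
    ((range L).filter (fun m => m % o = r)).card = L / o := by
  rw [filter_mod_eq_image ho hdvd hr, Finset.card_image_of_injective, card_range]
  intro a b hab
  exact Nat.eq_of_mul_eq_mul_left ho (Nat.add_left_cancel hab)

lemma sum_pow_filter_mod {L o r : ℕ} (ho : 0 < o) (hdvd : o ∣ L) (hr : r < o) (z : ℂ) :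
    ∑ m ∈ (range L).filter (fun m => m % o = r), z ^ m
      = z ^ r * ∑ t ∈ range (L / o), (z ^ o) ^ t := by
  rw [filter_mod_eq_image ho hdvd hr, Finset.sum_image (by intro a _ b _ hab; exact Nat.eq_of_mul_eq_mul_left ho (Nat.add_left_cancel hab))]
  rw [mul_sum]
  refine Finset.sum_congr rfl fun t _ => ?_
  rw [pow_add, pow_mul]

lemma sum_pow_range_eq_zero {z : ℂ} {n : ℕ} (hz : z ≠ 1) (h1 : z ^ n = 1) :
    ∑ t ∈ range n, z ^ t = 0 := by
  rw [geom_sum_eq hz, h1, sub_self, zero_div]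

lemma exists_pow_mem_of_index (K : Subgroup G) (hD : K.index ≠ 0) (w : G) :
    ∃ t : ℕ, 0 < t ∧ t ≤ K.index ∧ w ^ t ∈ K := by
  have hfin : Finite (G ⧸ K) := by
    refine Nat.finite_of_card_ne_zero ?_
    rw [← Subgroup.index_eq_card]; exact hD
  haveI := Fintype.ofFinite (G ⧸ K)
  have hcard : Fintype.card (G ⧸ K) < Fintype.card (Fin (K.index + 1)) := by
    rw [Fintype.card_fin, ← Nat.card_eq_fintype_card, ← Subgroup.index_eq_card]
    omega
  obtain ⟨a, b, hne, heq⟩ := Fintype.exists_ne_map_eq_of_card_lt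
    (fun m : Fin (K.index + 1) => (QuotientGroup.mk (w ^ (m : ℕ)) : G ⧸ K)) hcard
  rcases lt_or_gt_of_ne (fun h : (a:ℕ) = (b:ℕ) => hne (Fin.ext h)) with hab | hab
  · refine ⟨(b : ℕ) - (a : ℕ), by omega, by have := b.isLt; omega, ?_⟩
    have := (QuotientGroup.eq (s := K)).mp heq
    have hpow : (w ^ (a:ℕ))⁻¹ * w ^ (b:ℕ) = w ^ ((b:ℕ) - (a:ℕ)) := by
      rw [← pow_sub_mul_pow w (le_of_lt hab)]
      group
    rwa [hpow] at this
  · refine ⟨(a : ℕ) - (b : ℕ), by omega, by have := a.isLt; omega, ?_⟩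
    have := (QuotientGroup.eq (s := K)).mp heq.symm
    have hpow : (w ^ (b:ℕ))⁻¹ * w ^ (a:ℕ) = w ^ ((a:ℕ) - (b:ℕ)) := by
      rw [← pow_sub_mul_pow w (le_of_lt hab)]
      group
    rwa [hpow] at this

lemma line_lemma {s : ℕ} (hs : 4 ≤ s) (o : Fin s → ℕ) (N L : ℕ)
    (P : Fin s → ℕ → Prop)
    (huniq : ∀ m : ℕ, ∃! i, P i m)
    (hclass : ∀ (i : Fin s) (m₀ m : ℕ), P i m₀ → (P i m ↔ m % o i = m₀ % o i))
    (hopos : ∀ i, 0 < o i) (holeN : ∀ i, o i ≤ N)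
    (hdvdL : ∀ i, o i ∣ L) (hNL : N ∣ L) (hLpos : 0 < L)
    (hN3 : 3 ≤ N) (hNodd : Odd N)
    (hslot : ∀ i, o i = N → s - 4 < (i : ℕ))
    (hEx : ∃ i, o i = N ∧ ∃ m, P i m) :
    ∀ j : Fin s, s - 4 < (j : ℕ) → (o j = N ∧ ∃ m, P j m) := by
  classical
  set ω : ℂ := Complex.exp (2 * Real.pi * Complex.I / N) with hω
  have hprim : IsPrimitiveRoot ω N := Complex.isPrimitiveRoot_exp N (by omega)
  have hωpow : ∀ k, ω ^ k = 1 ↔ N ∣ k := fun k => hprim.pow_eq_one_iff_dvd k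
  have hωL : ω ^ L = 1 := (hωpow L).mpr hNL
  have hωne1 : ω ≠ 1 := by
    intro h
    have : N ∣ 1 := (hωpow 1).mp (by rw [pow_one, h])
    have := Nat.le_of_dvd one_pos this
    omega
  have hωne0 : ω ≠ 0 := by
    intro h
    have h1 : ω ^ N = 1 := (hωpow N).mpr dvd_rfl
    rw [h, zero_pow (by omega : N ≠ 0)] at h1
    exact zero_ne_one h1
  set E : Finset (Fin s) := univ.filter (fun i => o i = N ∧ ∃ m, P i m) with hE
  set f : ℕ → Fin s := fun m => (huniq m).choose with hf'
  have hfP : ∀ m, P (f m) m := fun m => (huniq m).choose_spec.1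
  have hfuniq : ∀ m i, P i m → f m = i := fun m i h => ((huniq m).choose_spec.2 i h).symm
  set ri : Fin s → ℕ := fun i => if h : ∃ m, P i m then h.choose % o i else 0 with hri'
  have hriP : ∀ (i : Fin s), (h : ∃ m, P i m) → ∀ m, (P i m ↔ m % o i = ri i) := by
    intro i h m
    simp only [hri', dif_pos h]
    exact hclass i h.choose m h.choose_spec
  have hrilt : ∀ (i : Fin s), (∃ m, P i m) → ri i < o i := by
    intro i h
    simp only [hri', dif_pos h]
    exact Nat.mod_lt _ (hopos i)
  have hfilter : ∀ i : Fin s,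
      (range L).filter (fun m => f m = i) = (range L).filter (fun m => P i m) := by
    intro i
    refine filter_congr fun m _ => ?_
    constructor
    · rintro rfl; exact hfP m
    · intro h; exact hfuniq m i h
  have hg : ∀ i : Fin s, ∑ m ∈ (range L).filter (fun m => P i m), ω ^ m
      = if i ∈ E then ((L / N : ℕ) : ℂ) * ω ^ ri i else 0 := by
    intro i
    by_cases hex : ∃ m, P i m
    · have hfe : (range L).filter (fun m => P i m)
          = (range L).filter (fun m => m % o i = ri i) :=
        filter_congr fun m _ => hriP i hex m
      rw [hfe, sum_pow_filter_mod (hopos i) (hdvdL i) (hrilt i hex) ω]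
      by_cases hoN : o i = N
      · have hiE : i ∈ E := by
          rw [hE, mem_filter]; exact ⟨mem_univ _, hoN, hex⟩
        rw [if_pos hiE, hoN]
        have hone : ω ^ N = 1 := (hωpow N).mpr dvd_rfl
        rw [hone]
        simp only [one_pow, sum_const, card_range, nsmul_eq_mul, mul_one]
        ring
      · have hiE : i ∉ E := by
          rw [hE, mem_filter]
          rintro ⟨-, h1, -⟩
          exact hoN h1
        rw [if_neg hiE]
        have hne1 : ω ^ o i ≠ 1 := by
          intro hdvd'
          rw [hωpow] at hdvd'
          have := Nat.le_of_dvd (hopos i) hdvd'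
          have := holeN i
          exact hoN (by omega)
        have hpow1 : (ω ^ o i) ^ (L / o i) = 1 := by
          rw [← pow_mul, Nat.mul_div_cancel' (hdvdL i), hωL]
        rw [sum_pow_range_eq_zero hne1 hpow1, mul_zero]
    · have hfe : (range L).filter (fun m => P i m) = ∅ :=
        filter_false_of_mem (fun m _ hm => hex ⟨m, hm⟩)
      have hiE : i ∉ E := by
        rw [hE, mem_filter]
        rintro ⟨-, -, h2⟩
        exact hex h2
      rw [hfe, if_neg hiE, sum_empty]
  have h0 : (0:ℂ) = ∑ i ∈ E, ((L / N : ℕ) : ℂ) * ω ^ ri i := by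
    calc (0:ℂ) = ∑ m ∈ range L, ω ^ m := (sum_pow_range_eq_zero hωne1 hωL).symm
      _ = ∑ i ∈ univ, ∑ m ∈ (range L).filter (fun m => f m = i), ω ^ m :=
          (sum_fiberwise_of_maps_to (fun m _ => mem_univ _) _).symm
      _ = ∑ i ∈ univ, ∑ m ∈ (range L).filter (fun m => P i m), ω ^ m := by
          refine sum_congr rfl fun i _ => ?_
          rw [hfilter i]
      _ = ∑ i ∈ univ, (if i ∈ E then ((L / N : ℕ) : ℂ) * ω ^ ri i else 0) :=
          sum_congr rfl fun i _ => hg i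
      _ = ∑ i ∈ E, ((L / N : ℕ) : ℂ) * ω ^ ri i := by
          rw [sum_ite_mem, univ_inter]
  have hLN0 : ((L / N : ℕ) : ℂ) ≠ 0 := by
    have : 0 < L / N := Nat.div_pos (Nat.le_of_dvd hLpos hNL) (by omega)
    exact_mod_cast this.ne'
  have hEsum : ∑ i ∈ E, ω ^ ri i = 0 := by
    have h0' := h0.symm
    rw [← mul_sum] at h0'
    rcases mul_eq_zero.mp h0' with h | h
    · exact absurd h hLN0
    · exact h
  have hi1 : s - 3 < s := by omega
  have hi2 : s - 2 < s := by omega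
  have hi3 : s - 1 < s := by omega
  set i₁ : Fin s := ⟨s - 3, hi1⟩
  set i₂ : Fin s := ⟨s - 2, hi2⟩
  set i₃ : Fin s := ⟨s - 1, hi3⟩
  have hEsub : E ⊆ {i₁, i₂, i₃} := by
    intro i hi
    have h1 : o i = N := ((mem_filter.mp hi).2).1
    have h2 := hslot i h1
    have h3 := i.isLt
    simp only [mem_insert, mem_singleton, Fin.ext_iff, Fin.val_mk, i₁, i₂, i₃]
    omega
  have hcard3 : ({i₁, i₂, i₃} : Finset (Fin s)).card = 3 := by
    rw [card_insert_of_notMem, card_insert_of_notMem, card_singleton]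
    · simp only [mem_singleton, Fin.ext_iff, Fin.val_mk, i₁, i₂, i₃]; omega
    · simp only [mem_insert, mem_singleton, Fin.ext_iff, Fin.val_mk, i₁, i₂, i₃]; omega
  have hne : E.Nonempty := by
    obtain ⟨i, h1, h2⟩ := hEx
    exact ⟨i, by rw [hE, mem_filter]; exact ⟨mem_univ _, h1, h2⟩⟩
  have hE3 : 3 ≤ E.card := by
    rcases Nat.lt_or_ge E.card 3 with hlt | hge
    · exfalso
      have hpos : 0 < E.card := card_pos.mpr hne
      interval_cases h : E.card
      · obtain ⟨a, ha⟩ := card_eq_one.mp h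
        rw [ha, sum_singleton] at hEsum
        exact pow_ne_zero _ hωne0 hEsum
      · obtain ⟨a, b, hab, hab2⟩ := card_eq_two.mp h
        rw [hab2, sum_insert (by simp [hab]), sum_singleton] at hEsum
        have heq : ω ^ ri a = - ω ^ ri b := eq_neg_of_add_eq_zero_left hEsum
        have h1 : (ω ^ ri a) ^ N = 1 := by
          rw [← pow_mul, mul_comm, pow_mul, (hωpow N).mpr dvd_rfl, one_pow]
        have h2 : (ω ^ ri b) ^ N = 1 := by
          rw [← pow_mul, mul_comm, pow_mul, (hωpow N).mpr dvd_rfl, one_pow]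
        rw [heq, hNodd.neg_pow, h2] at h1
        norm_num at h1
    · exact hge
  have hEeq : E = {i₁, i₂, i₃} := eq_of_subset_of_card_le hEsub (by rw [hcard3]; exact hE3)
  intro j hj
  have hjmem : j ∈ E := by
    rw [hEeq]
    have h3 := j.isLt
    simp only [mem_insert, mem_singleton, Fin.ext_iff, Fin.val_mk, i₁, i₂, i₃]
    omega
  exact ((mem_filter.mp hjmem).2)


end CosetAux

open CosetAux Finset


set_option maxHeartbeats 4000000

/-- If for some `w ∈ F n` we have `o_max(w) > d_{s-3}` (0-based: `d ⟨s-4,_⟩`)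
and the smallest prime dividing `o_max(w)` is at least 3, then the partition has multiplicity. -/
theorem multiplicity_of_omax_gt_d_sub_three_minFac_ge_three
    (n s : ℕ) (hn : 2 ≤ n) (hs : 4 ≤ s)
    (H : Fin s → Subgroup (FreeGroup (Fin n)))
    (α : Fin s → FreeGroup (Fin n))
    (d : Fin s → ℕ)
    (hind : ∀ i, (H i).index = d i)
    (hone : ∀ i, 1 < d i)
    (hmono : Monotone d)
    (hpart : ∀ x : FreeGroup (Fin n), ∃! i : Fin s, x * (α i)⁻¹ ∈ H i)
    (hw : ∃ (w : FreeGroup (Fin n)) (o : Fin s → ℕ) (omax : ℕ),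
        (∀ i, IsLeast {m : ℕ | 0 < m ∧ α i * w ^ m * (α i)⁻¹ ∈ H i} (o i)) ∧
        (∀ i, o i ≤ omax) ∧ (∃ i, o i = omax) ∧
        d ⟨s - 4, by omega⟩ < omax ∧ 3 ≤ omax.minFac) :
    ∃ i j, i ≠ j ∧ d i = d j := by
  classical
  obtain ⟨w, o, N, hleast, holeN, ⟨istar, histar⟩, hdN, hminfac⟩ := hw
  have hopos : ∀ i, 0 < o i := fun i => (hleast i).1.1
  have hd4 : 1 < d ⟨s - 4, by omega⟩ := hone _
  have hN3 : 3 ≤ N := by omega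
  have hNodd : Odd N := by
    rcases Nat.even_or_odd N with he | ho'
    · exfalso
      have h2 : (2 : ℕ) ∣ N := he.two_dvd
      have := Nat.minFac_le_of_dvd le_rfl h2
      omega
    · exact ho'
  -- conjugation powers
  have hconj : ∀ (i : Fin s) (m : ℕ), α i * w ^ m * (α i)⁻¹ = (α i * w * (α i)⁻¹) ^ m := by
    intro i m
    have := map_pow (MulAut.conj (α i)) w m
    simpa [MulAut.conj_apply] using this.symm
  have hdvdIff : ∀ (i : Fin s) (t : ℕ), α i * w ^ t * (α i)⁻¹ ∈ H i ↔ o i ∣ t := by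
    intro i t
    have hset : {m : ℕ | 0 < m ∧ α i * w ^ m * (α i)⁻¹ ∈ H i}
        = {m : ℕ | 0 < m ∧ (α i * w * (α i)⁻¹) ^ m ∈ H i} := by
      ext m
      simp only [Set.mem_setOf_eq, hconj]
    have h := hleast i
    rw [hset] at h
    rw [hconj]
    exact pow_mem_iff_dvd (H i) _ (o i) h t
  -- o i ≤ d i
  have holed : ∀ i, o i ≤ d i := by
    intro i
    set K : Subgroup (FreeGroup (Fin n)) := (H i).comap (MulAut.conj (α i)).toMonoidHom with hK
    have hKmem : ∀ g : FreeGroup (Fin n), g ∈ K ↔ α i * g * (α i)⁻¹ ∈ H i := by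
      intro g
      rw [hK, Subgroup.mem_comap]
      simp [MulAut.conj_apply]
    have hKind : K.index = d i := by
      rw [hK, Subgroup.index_comap_of_surjective _ (MulAut.conj (α i)).surjective]
      exact hind i
    obtain ⟨t, htpos, htle, htK⟩ := exists_pow_mem_of_index K
      (by rw [hKind]; have := hone i; omega) w
    have h1 : o i ≤ t := (hleast i).2 ⟨htpos, (hKmem _).mp htK⟩
    rw [hKind] at htle
    omega
  -- slots
  have hslot : ∀ i : Fin s, o i = N → s - 4 < (i : ℕ) := by
    intro i hiN
    by_contra hle
    push_neg at hle
    have h1 : i ≤ (⟨s - 4, by omega⟩ : Fin s) := by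
      rw [Fin.le_def]; exact hle
    have h2 : d i ≤ d ⟨s - 4, by omega⟩ := hmono h1
    have h3 : N ≤ d i := hiN ▸ holed i
    omega
  -- finite-index normal subgroup K
  haveI hHfin : ∀ i, (H i).FiniteIndex := by
    intro i
    refine ⟨?_⟩
    rw [hind i]
    have := hone i
    omega
  haveI hIfin : (⨅ i, H i).FiniteIndex := Subgroup.finiteIndex_iInf hHfin
  set K : Subgroup (FreeGroup (Fin n)) := (⨅ i, H i).normalCore with hKdef
  haveI hKnormal : K.Normal := Subgroup.normalCore_normal _
  haveI hKfin : K.FiniteIndex := Subgroup.finiteIndex_normalCore _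
  have hKle : ∀ i, K ≤ H i := fun i => (Subgroup.normalCore_le _).trans (iInf_le H i)
  haveI hQfin : Finite (FreeGroup (Fin n) ⧸ K) := Subgroup.finite_quotient_of_finiteIndex
  haveI := Fintype.ofFinite (FreeGroup (Fin n) ⧸ K)
  set wb : FreeGroup (Fin n) ⧸ K := (QuotientGroup.mk w : FreeGroup (Fin n) ⧸ K) with hwb
  set L : ℕ := orderOf wb with hLdef
  have hLpos : 0 < L := orderOf_pos wb
  have hwL : w ^ L ∈ K := by
    have h1 : wb ^ L = 1 := pow_orderOf_eq_one wb
    rw [hwb, ← QuotientGroup.mk_pow, QuotientGroup.eq_one_iff] at h1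
    exact h1
  -- right-K-invariance of coset membership
  have hKright : ∀ (j : Fin s) (u k : FreeGroup (Fin n)), k ∈ K →
      (u * k * (α j)⁻¹ ∈ H j ↔ u * (α j)⁻¹ ∈ H j) := by
    intro j u k hk
    have h1 : u * k * (α j)⁻¹ = (u * (α j)⁻¹) * (α j * k * (α j)⁻¹) := by group
    rw [h1]
    exact (H j).mul_mem_cancel_right (hKle j (hKnormal.conj_mem k hk (α j)))
  have hclassAll : ∀ (x : FreeGroup (Fin n)) (j : Fin s) (m₀ m : ℕ), x * w ^ m₀ * (α j)⁻¹ ∈ H j →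
      (x * w ^ m * (α j)⁻¹ ∈ H j ↔ m % o j = m₀ % o j) :=
    fun x j m₀ m h₀ => class_iff (H j) (α j) w x (o j) (hdvdIff j) h₀ m
  -- o j ∣ L
  have hP0 : ∀ j : Fin s, α j * w ^ 0 * (α j)⁻¹ ∈ H j := by
    intro j
    simpa using (H j).one_mem
  have hodvdL : ∀ j, o j ∣ L := by
    intro j
    have hL' : α j * w ^ L * (α j)⁻¹ ∈ H j :=
      hKle j (hKnormal.conj_mem _ hwL (α j))
    have h1 := (hclassAll (α j) j 0 L (hP0 j)).mp hL'
    rw [Nat.zero_mod] at h1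
    exact Nat.dvd_of_mod_eq_zero h1
  have hNdvdL : N ∣ L := histar ▸ hodvdL istar
  -- the per-line statement
  have hline : ∀ x : FreeGroup (Fin n), (∃ i, o i = N ∧ ∃ m, x * w ^ m * (α i)⁻¹ ∈ H i) →
      ∀ j : Fin s, s - 4 < (j : ℕ) → (o j = N ∧ ∃ m, x * w ^ m * (α j)⁻¹ ∈ H j) := by
    intro x hEx
    exact line_lemma hs o N L (fun i m => x * w ^ m * (α i)⁻¹ ∈ H i)
      (fun m => hpart (x * w ^ m))
      (fun i m₀ m h => hclassAll x i m₀ m h)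
      hopos holeN hodvdL hNdvdL hLpos hN3 hNodd hslot hEx
  -- top indices
  set i₁ : Fin s := ⟨s - 3, by omega⟩ with hi₁
  set i₂ : Fin s := ⟨s - 2, by omega⟩ with hi₂
  have hstart : ∃ i, o i = N ∧ ∃ m, α istar * w ^ m * (α i)⁻¹ ∈ H i :=
    ⟨istar, histar, 0, hP0 istar⟩
  have hoi₁ : o i₁ = N := (hline (α istar) hstart i₁ (by simp only [hi₁]; omega)).1
  have hoi₂ : o i₂ = N := (hline (α istar) hstart i₂ (by simp only [hi₂]; omega)).1
  -- per-line counts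
  have hceq : ∀ x : FreeGroup (Fin n),
      ((range L).filter (fun m => x * w ^ m * (α i₁)⁻¹ ∈ H i₁)).card
        = ((range L).filter (fun m => x * w ^ m * (α i₂)⁻¹ ∈ H i₂)).card := by
    intro x
    by_cases hc1 : ∃ m, x * w ^ m * (α i₁)⁻¹ ∈ H i₁
    · have hex : ∃ i, o i = N ∧ ∃ m, x * w ^ m * (α i)⁻¹ ∈ H i := ⟨i₁, hoi₁, hc1⟩
      obtain ⟨-, m₁, hm₁⟩ := hline x hex i₁ (by simp only [hi₁]; omega)
      obtain ⟨-, m₂, hm₂⟩ := hline x hex i₂ (by simp only [hi₂]; omega)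
      have e1 : ((range L).filter (fun m => x * w ^ m * (α i₁)⁻¹ ∈ H i₁)).card = L / N := by
        have hfe : (range L).filter (fun m => x * w ^ m * (α i₁)⁻¹ ∈ H i₁)
            = (range L).filter (fun m => m % N = m₁ % N) := by
          refine filter_congr fun m _ => ?_
          rw [hclassAll x i₁ m₁ m hm₁, hoi₁]
        rw [hfe]
        exact card_filter_mod (by omega) hNdvdL (Nat.mod_lt _ (by omega))
      have e2 : ((range L).filter (fun m => x * w ^ m * (α i₂)⁻¹ ∈ H i₂)).card = L / N := by
        have hfe : (range L).filter (fun m => x * w ^ m * (α i₂)⁻¹ ∈ H i₂)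
            = (range L).filter (fun m => m % N = m₂ % N) := by
          refine filter_congr fun m _ => ?_
          rw [hclassAll x i₂ m₂ m hm₂, hoi₂]
        rw [hfe]
        exact card_filter_mod (by omega) hNdvdL (Nat.mod_lt _ (by omega))
      rw [e1, e2]
    · have hc2 : ¬ ∃ m, x * w ^ m * (α i₂)⁻¹ ∈ H i₂ := by
        intro hc2
        exact hc1 ((hline x ⟨i₂, hoi₂, hc2⟩ i₁ (by simp only [hi₁]; omega)).2)
      rw [filter_false_of_mem (fun m _ hm => hc1 ⟨m, hm⟩),
        filter_false_of_mem (fun m _ hm => hc2 ⟨m, hm⟩)]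
  -- global counting in the finite quotient
  set C : Subgroup (FreeGroup (Fin n) ⧸ K) := Subgroup.zpowers wb with hC
  haveI : Fintype ((FreeGroup (Fin n) ⧸ K) ⧸ C) := Fintype.ofFinite _
  -- the image sets
  have hDwell : ∀ (j : Fin s) (a : FreeGroup (Fin n)),
      ((QuotientGroup.mk a : FreeGroup (Fin n) ⧸ K) ∈ {q : FreeGroup (Fin n) ⧸ K | ∃ b : FreeGroup (Fin n), (QuotientGroup.mk b : FreeGroup (Fin n) ⧸ K) = q ∧ b * (α j)⁻¹ ∈ H j})
        ↔ a * (α j)⁻¹ ∈ H j := by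
    intro j a
    constructor
    · rintro ⟨b, hb, hbH⟩
      have hk : b⁻¹ * a ∈ K := by
        rw [← QuotientGroup.eq]
        exact hb.symm ▸ rfl
      have ha : a = b * (b⁻¹ * a) := by group
      rw [ha]
      exact (hKright j b _ hk).mpr hbH
    · intro h
      exact ⟨a, rfl, h⟩
  set Df : Fin s → Finset (FreeGroup (Fin n) ⧸ K) := fun j =>
    univ.filter (fun q => ∃ b : FreeGroup (Fin n),
      (QuotientGroup.mk b : FreeGroup (Fin n) ⧸ K) = q ∧ b * (α j)⁻¹ ∈ H j) with hDf
  -- fiberwise count over lines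
  have hfiberline : ∀ (j : Fin s) (ℓ : (FreeGroup (Fin n) ⧸ K) ⧸ C),
      ((Df j).filter (fun q => (QuotientGroup.mk q : ((FreeGroup (Fin n) ⧸ K) ⧸ C)) = ℓ)).card
        = ((range L).filter (fun m =>
            (Quotient.out ℓ).out * w ^ m * (α j)⁻¹ ∈ H j)).card := by
    intro j ℓ
    set y : FreeGroup (Fin n) ⧸ K := Quotient.out ℓ with hy
    set yt : FreeGroup (Fin n) := y.out with hyt
    have hyeq : (QuotientGroup.mk yt : FreeGroup (Fin n) ⧸ K) = y := QuotientGroup.out_eq' y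
    have hleq : (QuotientGroup.mk y : ((FreeGroup (Fin n) ⧸ K) ⧸ C)) = ℓ := QuotientGroup.out_eq' ℓ
    have hmk : ∀ m : ℕ, (QuotientGroup.mk (yt * w ^ m) : FreeGroup (Fin n) ⧸ K) = y * wb ^ m := by
      intro m
      rw [QuotientGroup.mk_mul, QuotientGroup.mk_pow, hyeq, hwb]
    symm
    refine Finset.card_bij (fun m _ => y * wb ^ m) ?_ ?_ ?_
    · intro m hm
      rw [mem_filter] at hm ⊢
      obtain ⟨hmL, hmP⟩ := hm
      refine ⟨?_, ?_⟩
      · rw [hDf, mem_filter]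
        exact ⟨mem_univ _, yt * w ^ m, hmk m, hmP⟩
      · have hwbC : wb ^ m ∈ C := by
          rw [hC]
          exact Subgroup.npow_mem_zpowers wb m
        rw [QuotientGroup.mk_mul_of_mem y hwbC, hleq]
    · intro a ha b hb hab
      have h1 : wb ^ a = wb ^ b := mul_left_cancel hab
      rw [pow_inj_mod] at h1
      rw [mem_filter, mem_range] at ha hb
      have h2 : a % L = b % L := by rw [hLdef]; exact h1
      rwa [Nat.mod_eq_of_lt ha.1, Nat.mod_eq_of_lt hb.1] at h2
    · intro q hq
      rw [mem_filter] at hq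
      obtain ⟨hqD, hqℓ⟩ := hq
      have hyq : y⁻¹ * q ∈ C := by
        rw [← QuotientGroup.eq, hleq]
        exact hqℓ.symm
      obtain ⟨z, hz⟩ := Subgroup.mem_zpowers_iff.mp hyq
      have hL0 : (0:ℤ) < (L:ℤ) := by exact_mod_cast hLpos
      set m : ℕ := (z % (L:ℤ)).toNat with hm
      have hmlt : m < L := by
        have h1 := Int.emod_lt_of_pos z hL0
        have h2 := Int.emod_nonneg z (by omega : (L:ℤ) ≠ 0)
        omega
      have hwbm : wb ^ m = wb ^ z := by
        have h2 := Int.emod_nonneg z (by omega : (L:ℤ) ≠ 0)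
        have : ((m : ℕ) : ℤ) = z % (L:ℤ) := Int.toNat_of_nonneg h2
        rw [← zpow_natCast, this, hLdef, zpow_mod_orderOf]
      have hq' : y * wb ^ m = q := by
        rw [hwbm, hz]
        group
      refine ⟨m, ?_, hq'⟩
      rw [mem_filter, mem_range]
      refine ⟨hmlt, ?_⟩
      have : (QuotientGroup.mk (yt * w ^ m) : FreeGroup (Fin n) ⧸ K) ∈
          {q : FreeGroup (Fin n) ⧸ K | ∃ b : FreeGroup (Fin n),
            (QuotientGroup.mk b : FreeGroup (Fin n) ⧸ K) = q ∧ b * (α j)⁻¹ ∈ H j} := by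
        rw [hmk m, hq']
        rw [hDf, mem_filter] at hqD
        obtain ⟨-, b, hb1, hb2⟩ := hqD
        exact ⟨b, hb1, hb2⟩
      exact (hDwell j (yt * w ^ m)).mp this
  have hDcard : (Df i₁).card = (Df i₂).card := by
    rw [card_eq_sum_card_fiberwise
        (f := fun q => (QuotientGroup.mk q : ((FreeGroup (Fin n) ⧸ K) ⧸ C)))
        (fun q _ => mem_univ _),
      card_eq_sum_card_fiberwise
        (f := fun q => (QuotientGroup.mk q : ((FreeGroup (Fin n) ⧸ K) ⧸ C)))
        (fun q _ => mem_univ _)]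
    refine sum_congr rfl fun ℓ _ => ?_
    rw [hfiberline i₁ ℓ, hfiberline i₂ ℓ]
    exact hceq _
  -- cardinality of Df j via the subgroup image
  have hDfcard : ∀ j : Fin s, (Df j).card * d j = Fintype.card (FreeGroup (Fin n) ⧸ K) := by
    intro j
    set Hb : Subgroup (FreeGroup (Fin n) ⧸ K) := (H j).map (QuotientGroup.mk' K) with hHb
    have hHbmem : ∀ u : FreeGroup (Fin n),
        (QuotientGroup.mk u : FreeGroup (Fin n) ⧸ K) ∈ Hb ↔ u ∈ H j := by
      intro u
      constructor
      · rintro ⟨h, hh, heq⟩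
        rw [QuotientGroup.mk'_apply] at heq
        have hk : h⁻¹ * u ∈ K := by rw [← QuotientGroup.eq]; exact heq
        have : u = h * (h⁻¹ * u) := by group
        rw [this]
        exact (H j).mul_mem hh (hKle j hk)
      · intro h
        exact ⟨u, h, rfl⟩
    have hHbind : Hb.index = d j := by
      rw [hHb, Subgroup.index_map, QuotientGroup.ker_mk',
        sup_of_le_left (hKle j),
        MonoidHom.range_eq_top_of_surjective _ (QuotientGroup.mk'_surjective K),
        Subgroup.index_top, mul_one, hind j]
    have hDfHb : (Df j).card = (univ.filter (fun q => q ∈ Hb)).card := by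
      refine Finset.card_bij' (fun q _ => q * (QuotientGroup.mk (α j) : FreeGroup (Fin n) ⧸ K)⁻¹)
        (fun q _ => q * (QuotientGroup.mk (α j) : FreeGroup (Fin n) ⧸ K)) ?_ ?_ ?_ ?_
      · intro q hq
        rw [hDf, mem_filter] at hq
        obtain ⟨-, b, rfl, hb2⟩ := hq
        rw [mem_filter]
        refine ⟨mem_univ _, ?_⟩
        have hmem := (hHbmem (b * (α j)⁻¹)).mpr hb2
        simpa using hmem
      · intro q hq
        rw [mem_filter] at hq
        rw [hDf, mem_filter]
        refine ⟨mem_univ _, ?_⟩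
        induction q using QuotientGroup.induction_on with
        | H a =>
          refine ⟨a * α j, ?_, ?_⟩
          · rw [QuotientGroup.mk_mul]
          · have : a * α j * (α j)⁻¹ = a := by group
            rw [this]
            exact (hHbmem a).mp hq.2
      · intro q _
        group
      · intro q _
        group
    have h1 : Nat.card Hb * Hb.index = Fintype.card (FreeGroup (Fin n) ⧸ K) := by
      rw [← Nat.card_eq_fintype_card]
      exact Subgroup.card_mul_index Hb
    have h2 : (univ.filter (fun q => q ∈ Hb)).card = Nat.card Hb := by
      rw [Nat.card_eq_fintype_card, Fintype.card_subtype]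
    rw [hDfHb, h2, ← hHbind, h1]
  -- conclude
  have e1 := hDfcard i₁
  have e2 := hDfcard i₂
  rw [hDcard] at e1
  have hQpos : 0 < Fintype.card (FreeGroup (Fin n) ⧸ K) := Fintype.card_pos
  have hDpos : 0 < (Df i₂).card := by
    rcases Nat.eq_zero_or_pos (Df i₂).card with h | h
    · rw [h, zero_mul] at e2; omega
    · exact h
  have hdd : d i₁ = d i₂ := by
    have := e1.trans e2.symm
    exact Nat.eq_of_mul_eq_mul_left hDpos this
  refine ⟨i₁, i₂, ?_, hdd⟩
  intro hcontr
  rw [hi₁, hi₂, Fin.mk.injEq] at hcontr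
  omega
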